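/- arXiv:2009.11620 — 3 statements merged into one kernel-verified Lean document; each statement's English description precedes it below -/
import Mathlib

section
/- Let A and B be small categories, i : A → B a fully faithful functor, C a category with all small colimits, and F : B → C a functor. Then the left Kan extension Lan_{y_B}(F) : P(B) → C of F along the Yoneda embedding y_B factors through i^* : P(B) → P(A) up to natural isomorphism (i.e. there exists a functor G : P(A) → C and a natural isomorphism Lan_{y_B}(F) ≅ G ∘ i^*) if and only if the canonical natural transformation Lan_i(F ∘ i) → F, induced by the universal property of the left Kan extension of F ∘ i along i from the identity natural transformation of F ∘ i, is a natural isomorphism. -/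
set_option linter.unusedSectionVars false


open CategoryTheory CategoryTheory.Limits

universe v w u

namespace CategoryTheory.Presheaf

/-- `F ⋙ yoneda` is naturally isomorphic to `yoneda ⋙ F.op.lan`. -/
noncomputable def compYonedaIsoYonedaCompLan {A B : Type u} [SmallCategory A] [SmallCategory B]
    (F : A ⥤ B) : F ⋙ yoneda ≅ yoneda ⋙ F.op.lan :=
  NatIso.ofComponents (fun X => Functor.leftKanExtensionUnique _
    (yonedaMap F X) (F.op.lan.obj _) (F.op.lanUnit.app (yoneda.obj X)))
    (fun {X Y} f => by
      apply yonedaEquiv.injective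
      have eq₁ := ConcreteCategory.congr_hom
        ((yoneda.obj (F.obj Y)).descOfIsLeftKanExtension_fac_app
        (yonedaMap F Y) (F.op.lan.obj (yoneda.obj Y))
          (F.op.lanUnit.app (yoneda.obj Y)) _) f
      have eq₂ := ConcreteCategory.congr_hom
        (((yoneda.obj (F.obj X)).descOfIsLeftKanExtension_fac_app
        (yonedaMap F X) (F.op.lan.obj (yoneda.obj X))
          (F.op.lanUnit.app (yoneda.obj X))) (Opposite.op X)) (𝟙 X)
      have eq₃ := ConcreteCategory.congr_hom (congr_app (F.op.lanUnit.naturality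
        (yoneda.map f)) (Opposite.op X)) (𝟙 X)
      rw [yonedaEquiv_apply, yonedaEquiv_apply]
      dsimp [yonedaMap, Functor.leftKanExtensionUnique, Functor.leftKanExtensionUniqueOfIso] at eq₁ eq₂ eq₃ ⊢
      simp only [Functor.map_id] at eq₂
      simp only [Category.id_comp] at eq₃
      simp [eq₁, eq₂, eq₃])

end CategoryTheory.Presheaf

namespace KanExtFactorProof

variable {A B : Type u} [SmallCategory A] [SmallCategory B]
  {C : Type w} [Category.{v} C] [HasColimitsOfSize.{u, u} C]
  (i : A ⥤ B) [i.Full] [i.Faithful]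

/-- The restriction functor `i^* : P(B) ⥤ P(A)`. -/
noncomputable abbrev W : (Bᵒᵖ ⥤ Type u) ⥤ (Aᵒᵖ ⥤ Type u) :=
  (Functor.whiskeringLeft Aᵒᵖ Bᵒᵖ (Type u)).obj i.op

/-- For fully faithful `i`, the map `yonedaMap i a : y(a) ⟶ i^* y(i a)` is an iso. -/
noncomputable def e1component (a : A) :
    (yoneda.obj a : Aᵒᵖ ⥤ Type u) ≅ i.op ⋙ yoneda.obj (i.obj a) where
  hom := yonedaMap i a
  inv :=
    { app := fun a' => ↾fun g => i.preimage g
      naturality := fun a' a'' f => by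
        ext g
        apply i.map_injective
        simp }
  hom_inv_id := by
    ext a' f
    exact i.preimage_map f
  inv_hom_id := by
    ext a' g
    simp [yonedaMap]

/-- The natural isomorphism `y_A ≅ i ⋙ y_B ⋙ i^*`. -/
noncomputable def e1 : (yoneda : A ⥤ Aᵒᵖ ⥤ Type u) ≅ i ⋙ yoneda ⋙ W i :=
  NatIso.ofComponents (fun a => e1component i a) (fun f => by
    ext a' g
    simp [e1component, yonedaMap])

variable (F : B ⥤ C)

/-- The unit for `y_B ⋙ i^* ⋙ H` as a left extension of `i ⋙ F` along `i`. -/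
noncomputable def beta (H : (Aᵒᵖ ⥤ Type u) ⥤ C) (uH : i ⋙ F ⟶ yoneda ⋙ H) :
    i ⋙ F ⟶ i ⋙ (yoneda ⋙ W i ⋙ H) :=
  uH ≫ Functor.whiskerRight (e1 i).hom H

variable {i}

/-- The leg of the comparison. -/
noncomputable def Jhom {b : B} (f : CostructuredArrow i b) :
    (yoneda.obj f.left : Aᵒᵖ ⥤ Type u) ⟶ (W i).obj (yoneda.obj b) :=
  yonedaEquiv.symm (show ((W i).obj (yoneda.obj b)).obj (Opposite.op f.left) from f.hom)

lemma Jhom_app {b : B} (f : CostructuredArrow i b) {a' : A} (g : a' ⟶ f.left) :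
    (Jhom f).app (Opposite.op a') g = i.map g ≫ f.hom := by
  rfl

lemma comp_Jhom {b : B} {f f' : CostructuredArrow i b} (g : f ⟶ f') :
    yoneda.map g.left ≫ Jhom f' = Jhom f := by
  ext a' h
  show i.map (h ≫ g.left) ≫ f'.hom = i.map h ≫ f.hom
  rw [i.map_comp, Category.assoc, CostructuredArrow.w g]

/-- Comparison functor between costructured arrow categories. -/
noncomputable def J (b : B) :
    CostructuredArrow i b ⥤ CostructuredArrow (yoneda : A ⥤ _) ((W i).obj (yoneda.obj b)) where
  obj f := CostructuredArrow.mk (Jhom f)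
  map {f f'} g := CostructuredArrow.homMk g.left (by
    rw [CostructuredArrow.mk_hom_eq_self]
    exact comp_Jhom g)

noncomputable instance (b : B) : (J (i := i) b).Faithful where
  map_injective h := by
    have := congr_arg CommaMorphism.left h
    ext
    exact this

noncomputable instance (b : B) : (J (i := i) b).Full where
  map_surjective {f f'} h := by
    refine ⟨CostructuredArrow.homMk h.left ?_, ?_⟩
    · have hw : yoneda.map h.left ≫ Jhom f' = Jhom f := CostructuredArrow.w h
      obtain ⟨g, hg⟩ : ∃ g : f.left ⟶ f'.left, g = h.left := ⟨_, rfl⟩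
      rw [← hg] at hw ⊢
      have h2 : (Jhom f').app (Opposite.op f.left) (𝟙 f.left ≫ g)
          = (Jhom f).app (Opposite.op f.left) (𝟙 f.left) := ConcreteCategory.congr_hom (congr_app hw (Opposite.op f.left)) (𝟙 f.left)
      dsimp at h2
      rw [Jhom_app, Jhom_app] at h2
      simpa using h2
    · ext
      rfl

noncomputable instance (b : B) : (J (i := i) b).EssSurj where
  mem_essImage g := by
    refine ⟨CostructuredArrow.mk (show i.obj g.left ⟶ b from yonedaEquiv g.hom),
      ⟨CostructuredArrow.isoMk (Iso.refl _) ?_⟩⟩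
    have h1 : Jhom (CostructuredArrow.mk (show i.obj g.left ⟶ b from yonedaEquiv g.hom))
        = g.hom := yonedaEquiv.symm_apply_apply g.hom
    simpa [J] using h1.symm

noncomputable instance (b : B) : (J (i := i) b).IsEquivalence where

variable (i)

/-- (★) `y_B ⋙ i^* ⋙ H` is a pointwise left Kan extension of `i ⋙ F` along `i`,
whenever `H` is a left Kan extension of `i ⋙ F` along `y_A`. -/
noncomputable def starIsPointwise (H : (Aᵒᵖ ⥤ Type u) ⥤ C) (uH : i ⋙ F ⟶ yoneda ⋙ H)
    [H.IsLeftKanExtension uH] :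
    (Functor.LeftExtension.mk (yoneda ⋙ W i ⋙ H) (beta i F H uH)).IsPointwiseLeftKanExtension :=
  fun b => by
    have hG := Functor.isPointwiseLeftKanExtensionOfIsLeftKanExtension H uH
      ((W i).obj (yoneda.obj b))
    refine IsColimit.ofIsoColimit (hG.whiskerEquivalence (J b).asEquivalence)
      (Cocones.ext (Iso.refl _) (fun f => ?_))
    have key : Jhom f = (e1 i).hom.app f.left ≫ Functor.whiskerLeft i.op (yoneda.map f.hom) := by
      ext a' g
      rfl
    change (uH.app f.left ≫ H.map (Jhom f)) ≫ 𝟙 _ = (uH.app f.left ≫ H.map ((e1 i).hom.app f.left))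
      ≫ H.map (Functor.whiskerLeft i.op (yoneda.map f.hom))
    rw [Category.comp_id, Category.assoc, ← H.map_comp]
    exact congr_arg (fun t => uH.app f.left ≫ H.map t) key

lemma star (H : (Aᵒᵖ ⥤ Type u) ⥤ C) (uH : i ⋙ F ⟶ yoneda ⋙ H) [H.IsLeftKanExtension uH] :
    (yoneda ⋙ W i ⋙ H).IsLeftKanExtension (beta i F H uH) :=
  (starIsPointwise i F H uH).isLeftKanExtension

/-- Uniqueness comparison is compatible with the units. -/
lemma unit_comp_leftKanExtensionUnique_hom {C' : Type*} {D' : Type*} {H' : Type*}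
    [Category C'] [Category D'] [Category H'] {L : C' ⥤ D'} {X : C' ⥤ H'}
    (F' : D' ⥤ H') (α : X ⟶ L ⋙ F') [F'.IsLeftKanExtension α]
    (F'' : D' ⥤ H') (α' : X ⟶ L ⋙ F'') [F''.IsLeftKanExtension α'] :
    α ≫ Functor.whiskerLeft L (Functor.leftKanExtensionUnique F' α F'' α').hom = α' := by
  dsimp [Functor.leftKanExtensionUnique, Functor.leftKanExtensionUniqueOfIso]
  rw [Functor.descOfIsLeftKanExtension_fac]
  simp

/-- The key compatibility: the canonical map `y_B (i a) ⟶ i_! (y_A a)`, followed by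
`i_!` of the canonical iso `y_A a ≅ i^* y_B (i a)`, followed by the counit of `i_! ⊣ i^*`,
is the identity. -/
lemma key_triangle (a : A) :
    (Presheaf.compYonedaIsoYonedaCompLan i).hom.app a ≫
      i.op.lan.map ((e1 i).hom.app a) ≫
        (i.op.lanAdjunction (Type u)).counit.app (yoneda.obj (i.obj a)) = 𝟙 _ := by
  apply (yoneda.obj (i.obj a)).hom_ext_of_isLeftKanExtension (yonedaMap i a)
  have h1 : yonedaMap i a ≫
      Functor.whiskerLeft i.op ((Presheaf.compYonedaIsoYonedaCompLan i).hom.app a)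
      = i.op.lanUnit.app (yoneda.obj a) :=
    unit_comp_leftKanExtensionUnique_hom (yoneda.obj (i.obj a)) (yonedaMap i a)
      (i.op.lan.obj (yoneda.obj a)) (i.op.lanUnit.app (yoneda.obj a))
  have h2 : i.op.lanUnit.app (yoneda.obj a) ≫
      Functor.whiskerLeft i.op (i.op.lan.map ((e1 i).hom.app a))
      = (e1 i).hom.app a ≫ i.op.lanUnit.app (i.op ⋙ yoneda.obj (i.obj a)) := by
    simpa using (i.op.lanUnit.naturality ((e1 i).hom.app a)).symm
  rw [Functor.whiskerLeft_comp, Functor.whiskerLeft_comp]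
  rw [← Category.assoc, h1]
  rw [← Category.assoc, h2]
  rw [Category.assoc, Functor.lanUnit_app_whiskerLeft_lanAdjunction_counit_app]
  ext a' g
  simp [e1, e1component, yonedaMap]

section Psi

variable {C : Type w} [Category.{v} C] [HasColimitsOfSize.{u, u} C] (F : B ⥤ C)

/-- `i_! ⋙ Lan_{y_B} F` is a pointwise left Kan extension of `i ⋙ F` along `y_A`. -/
noncomputable def psiIsPointwise :
    (Functor.LeftExtension.mk (i.op.lan ⋙ yoneda.leftKanExtension F)
      (Functor.whiskerLeft i (yoneda.leftKanExtensionUnit F) ≫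
        Functor.whiskerRight (Presheaf.compYonedaIsoYonedaCompLan i).hom
          (yoneda.leftKanExtension F))).IsPointwiseLeftKanExtension := by
  intro P
  have htaut := Presheaf.isColimitTautologicalCocone P
  haveI : PreservesColimitsOfSize.{u, u} (i.op.lan (H := Type u)) :=
    (i.op.lanAdjunction (Type u)).leftAdjoint_preservesColimits
  have hlanC := isColimitOfPreserves i.op.lan htaut
  let e3 : (CostructuredArrow.proj yoneda P ⋙ i) ⋙ yoneda ≅
      (CostructuredArrow.proj yoneda P ⋙ yoneda) ⋙ i.op.lan :=
    Functor.isoWhiskerLeft (CostructuredArrow.proj yoneda P)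
      (Presheaf.compYonedaIsoYonedaCompLan i)
  let c₁ := (Cocone.precompose e3.hom).obj
    (i.op.lan.mapCocone (Presheaf.tautologicalCocone P))
  have hc₁ : IsColimit c₁ := (IsColimit.precomposeHomEquiv e3 _).symm hlanC
  haveI hfin := Presheaf.final_toCostructuredArrow_comp_pre
    (F := CostructuredArrow.proj yoneda P ⋙ i) hc₁
  have hΦ := Functor.isPointwiseLeftKanExtensionOfIsLeftKanExtension
    (yoneda.leftKanExtension F) (yoneda.leftKanExtensionUnit F) (i.op.lan.obj P)
  exact IsColimit.ofIsoColimit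
    (((Functor.Final.isColimitWhiskerEquiv
        (c₁.toCostructuredArrow ⋙ CostructuredArrow.pre _ yoneda c₁.pt) _).symm hΦ))
    (Cocones.ext (Iso.refl _) (fun x => by
      change ((yoneda.leftKanExtensionUnit F).app (i.obj x.left) ≫ (yoneda.leftKanExtension F).map
        ((Presheaf.compYonedaIsoYonedaCompLan i).hom.app x.left ≫ i.op.lan.map x.hom)) ≫ 𝟙 _ =
        ((yoneda.leftKanExtensionUnit F).app (i.obj x.left) ≫ (yoneda.leftKanExtension F).map
        ((Presheaf.compYonedaIsoYonedaCompLan i).hom.app x.left)) ≫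
        (yoneda.leftKanExtension F).map (i.op.lan.map x.hom)
      simp [Functor.map_comp]))

end Psi

end KanExtFactorProof

open KanExtFactorProof in
theorem statement0 {A B : Type u} [SmallCategory A] [SmallCategory B]
    {C : Type w} [Category.{v} C] [HasColimitsOfSize.{u, u} C]
    (i : A ⥤ B) [i.Full] [i.Faithful] (F : B ⥤ C) :
    (∃ G : (Aᵒᵖ ⥤ Type u) ⥤ C,
        Nonempty (yoneda.leftKanExtension F ≅ ((Functor.whiskeringLeft Aᵒᵖ Bᵒᵖ (Type u)).obj i.op) ⋙ G))
      ↔ IsIso ((i.leftKanExtension (i ⋙ F)).descOfIsLeftKanExtension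
          (i.leftKanExtensionUnit (i ⋙ F)) F (𝟙 (i ⋙ F))) := by
  rw [← Functor.isLeftKanExtension_iff_isIso
    ((i.leftKanExtension (i ⋙ F)).descOfIsLeftKanExtension
      (i.leftKanExtensionUnit (i ⋙ F)) F (𝟙 (i ⋙ F)))
    (i.leftKanExtensionUnit (i ⋙ F)) (𝟙 (i ⋙ F))
    (Functor.descOfIsLeftKanExtension_fac _ _ _ _)]
  -- Common setup
  let Φ := yoneda.leftKanExtension F
  let ηF := yoneda.leftKanExtensionUnit F
  haveI hηapp : ∀ b, IsIso (ηF.app b) := fun b =>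
    ((Functor.isPointwiseLeftKanExtensionOfIsLeftKanExtension Φ ηF)
      (yoneda.obj b)).isIso_hom_app
  haveI hη : IsIso ηF := NatIso.isIso_of_isIso_app ηF
  let adj := i.op.lanAdjunction (Type u)
  let Ψ := i.op.lan ⋙ Φ
  let uΨ : i ⋙ F ⟶ yoneda ⋙ Ψ :=
    Functor.whiskerLeft i ηF ≫ Functor.whiskerRight (Presheaf.compYonedaIsoYonedaCompLan i).hom Φ
  haveI hΨ : Ψ.IsLeftKanExtension uΨ := (psiIsPointwise i F).isLeftKanExtension
  haveI hstar := star i F Ψ uΨ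
  let t : W i ⋙ Ψ ⟶ Φ := Functor.whiskerRight adj.counit Φ
  let σ : yoneda ⋙ W i ⋙ Ψ ⟶ F := Functor.whiskerLeft yoneda t ≫ inv ηF
  have hσcomp : σ ≫ ηF = Functor.whiskerLeft yoneda t := by
    dsimp only [σ]
    rw [Category.assoc, IsIso.inv_hom_id, Category.comp_id]
  have hWε : ∀ Q, IsIso ((W i).map (adj.counit.app Q)) := fun Q => by
    haveI : IsIso (adj.unit.app ((W i).obj Q) ≫ (W i).map (adj.counit.app Q)) := by
      rw [adj.right_triangle_components Q]
      exact IsIso.id _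
    exact IsIso.of_isIso_comp_left (adj.unit.app ((W i).obj Q))
      ((W i).map (adj.counit.app Q))
  have comm : beta i F Ψ uΨ ≫ Functor.whiskerLeft i σ = 𝟙 (i ⋙ F) := by
    ext a
    have k := key_triangle i a
    have hinv : ηF.app (i.obj a) ≫ (inv ηF).app (i.obj a) = 𝟙 _ :=
      NatTrans.congr_app (IsIso.hom_inv_id ηF) (i.obj a)
    dsimp [beta, σ, t, uΨ, Ψ]
    rw [Category.assoc, Category.assoc, ← Functor.map_comp_assoc, ← Functor.map_comp_assoc,
      Category.assoc, k]
    rw [CategoryTheory.Functor.map_id Φ ((i ⋙ yoneda).obj a)]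
    simp
  have hiff := Functor.isLeftKanExtension_iff_isIso σ (beta i F Ψ uΨ) (𝟙 (i ⋙ F)) comm
  constructor
  · rintro ⟨G', ⟨e⟩⟩
    have htapp : ∀ Q, IsIso (t.app Q) := fun Q => by
      haveI := hWε Q
      have hn := e.hom.naturality (adj.counit.app Q)
      simp only [Functor.id_obj] at hn
      show IsIso (Φ.map (adj.counit.app Q))
      haveI := hWε Q
      haveI : IsIso (Φ.map (adj.counit.app Q) ≫ e.hom.app Q) := by
        rw [hn]
        simp only [Functor.comp_map]
        infer_instance
      exact IsIso.of_isIso_comp_right (Φ.map (adj.counit.app Q)) (e.hom.app Q)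
    haveI : IsIso t := NatIso.isIso_of_isIso_app t
    haveI : IsIso σ := by
      dsimp only [σ]
      infer_instance
    exact hiff.mpr inferInstance
  · intro hF
    have hσ : IsIso σ := hiff.mp hF
    let δ := Φ.descOfIsLeftKanExtension ηF (W i ⋙ Ψ) (inv σ)
    have hfac : ηF ≫ Functor.whiskerLeft yoneda δ = inv σ :=
      Functor.descOfIsLeftKanExtension_fac Φ ηF (W i ⋙ Ψ) (inv σ)
    have claim1 : δ ≫ t = 𝟙 Φ := by
      apply Φ.hom_ext_of_isLeftKanExtension ηF
      rw [Functor.whiskerLeft_comp, ← Category.assoc, hfac, ← hσcomp, ← Category.assoc,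
        IsIso.inv_hom_id, Category.id_comp]
      simp
    have claim1app : ∀ Q, δ.app Q ≫ t.app Q = 𝟙 _ := fun Q => NatTrans.congr_app claim1 Q
    haveI hmonoδ : ∀ Q, Mono (δ.app Q) := fun Q => by
      haveI : IsSplitMono (δ.app Q) := IsSplitMono.mk' ⟨t.app Q, claim1app Q⟩
      infer_instance
    have claim2 : ∀ Q, t.app Q ≫ δ.app Q = 𝟙 _ := fun Q => by
      haveI := hWε Q
      have hnat : t.app Q ≫ δ.app Q
          = δ.app (i.op.lan.obj ((W i).obj Q)) ≫ Ψ.map ((W i).map (adj.counit.app Q)) :=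
        δ.naturality (adj.counit.app Q)
      haveI := hmonoδ (i.op.lan.obj ((W i).obj Q))
      haveI : Mono (t.app Q ≫ δ.app Q) := by
        rw [hnat]
        exact mono_comp _ _
      have hidem : (t.app Q ≫ δ.app Q) ≫ t.app Q ≫ δ.app Q = 𝟙 _ ≫ t.app Q ≫ δ.app Q := by
        rw [Category.id_comp, Category.assoc, ← Category.assoc (δ.app Q), claim1app,
          Category.id_comp]
      exact (cancel_mono (t.app Q ≫ δ.app Q)).mp hidem
    haveI : ∀ Q, IsIso (δ.app Q) := fun Q => ⟨t.app Q, claim1app Q, claim2 Q⟩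
    haveI : IsIso δ := NatIso.isIso_of_isIso_app δ
    exact ⟨Ψ, ⟨asIso δ⟩⟩
end

section
/- Let A and B be small categories with i : A → B fully faithful, and let C be a category with all small colimits. A functor H : P(B) → C factors through i^* up to natural isomorphism (i.e. there exist G : P(A) → C and a natural isomorphism H ≅ G ∘ i^*) if and only if the natural transformation H ∘ ε : H ∘ i_! ∘ i^* → H, obtained by whiskering the counit ε : i_! ∘ i^* → id of the adjunction i_! ⊣ i^* with H, is a natural isomorphism. -/
open CategoryTheory CategoryTheory.Limits

universe v w u

theorem statement2 {A B : Type u} [SmallCategory A] [SmallCategory B]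
    {C : Type w} [Category.{v} C] [HasColimitsOfSize.{u, u} C]
    (i : A ⥤ B) [i.Full] [i.Faithful]
    (H : (Bᵒᵖ ⥤ Type u) ⥤ C) :
    (∃ G : (Aᵒᵖ ⥤ Type u) ⥤ C,
        Nonempty (H ≅ ((Functor.whiskeringLeft Aᵒᵖ Bᵒᵖ (Type u)).obj i.op) ⋙ G))
      ↔ IsIso (Functor.whiskerRight (i.op.lanAdjunction (Type u)).counit H) := by
  set adj := i.op.lanAdjunction (Type u)
  constructor
  · rintro ⟨G, ⟨e⟩⟩
    have hunit : IsIso adj.unit := inferInstance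
    suffices h : ∀ X, IsIso ((Functor.whiskerRight adj.counit H).app X) from
      NatIso.isIso_of_isIso_app _
    intro X
    -- (whiskerRight adj.counit H).app X = H.map (adj.counit.app X)
    have h1 : IsIso (((Functor.whiskeringLeft Aᵒᵖ Bᵒᵖ (Type u)).obj i.op).map (adj.counit.app X)) := by
      have hη : IsIso (adj.unit.app (((Functor.whiskeringLeft Aᵒᵖ Bᵒᵖ (Type u)).obj i.op).obj X)) :=
        inferInstance
      have tri := adj.right_triangle_components X
      have heq := IsIso.inv_eq_of_hom_inv_id tri
      rw [← heq]
      infer_instance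
    have h2 : IsIso ((((Functor.whiskeringLeft Aᵒᵖ Bᵒᵖ (Type u)).obj i.op) ⋙ G).map (adj.counit.app X)) := by
      dsimp only [Functor.comp_map]
      infer_instance
    have h3 : IsIso (H.map (adj.counit.app X)) := by
      have : H.map (adj.counit.app X) =
          e.hom.app _ ≫ (((Functor.whiskeringLeft Aᵒᵖ Bᵒᵖ (Type u)).obj i.op) ⋙ G).map (adj.counit.app X)
            ≫ e.inv.app _ := by
        rw [← e.hom.naturality_assoc, Iso.hom_inv_id_app, Category.comp_id]
      rw [this]; infer_instance
    exact h3
  · intro h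
    refine ⟨i.op.lan ⋙ H, ⟨?_⟩⟩
    exact H.leftUnitor.symm ≪≫ (asIso (Functor.whiskerRight adj.counit H)).symm ≪≫
      Functor.associator _ _ _
end

section
/- Let A and B be small categories, i : A → B a fully faithful functor, and C a category with all small colimits. For any functor H : A → C, there is a natural isomorphism Lan_{y_A}(H) ∘ i^* ≅ Lan_{y_B ∘ i}(H) of functors P(B) → C, natural in H; equivalently, (i^*)^* ∘ (y_A)_! ≅ (y_B)_! ∘ Lan_i(−) as functors from Fun(A, C) to the category of colimit-preserving functors P(B) → C. -/
open CategoryTheory CategoryTheory.Limits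

universe v w u

theorem statement4 {A B : Type u} [SmallCategory A] [SmallCategory B]
    {C : Type w} [Category.{v} C] [HasColimitsOfSize.{u, u} C]
    (i : A ⥤ B) [i.Full] [i.Faithful] :
    Nonempty
      ((yoneda.lan ⋙ (Functor.whiskeringLeft (Bᵒᵖ ⥤ Type u) (Aᵒᵖ ⥤ Type u) C).obj
          ((Functor.whiskeringLeft Aᵒᵖ Bᵒᵖ (Type u)).obj i.op) :
            (A ⥤ C) ⥤ ((Bᵒᵖ ⥤ Type u) ⥤ C))
        ≅ (i ⋙ yoneda).lan) := by
  constructor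
  have adjA : yoneda.lan ⊣ (Functor.whiskeringLeft A (Aᵒᵖ ⥤ Type u) C).obj yoneda :=
    yoneda.lanAdjunction C
  have adjW : (Functor.whiskeringLeft (Bᵒᵖ ⥤ Type u) (Aᵒᵖ ⥤ Type u) C).obj
        ((Functor.whiskeringLeft Aᵒᵖ Bᵒᵖ (Type u)).obj i.op)
      ⊣ (Functor.whiskeringLeft (Aᵒᵖ ⥤ Type u) (Bᵒᵖ ⥤ Type u) C).obj i.op.lan :=
    (i.op.lanAdjunction (Type u)).whiskerLeft C
  have iso : ((Functor.whiskeringLeft (Aᵒᵖ ⥤ Type u) (Bᵒᵖ ⥤ Type u) C).obj i.op.lan ⋙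
        (Functor.whiskeringLeft A (Aᵒᵖ ⥤ Type u) C).obj yoneda)
      ≅ (Functor.whiskeringLeft A (Bᵒᵖ ⥤ Type u) C).obj (i ⋙ yoneda) := by
    refine Iso.trans ?_ ((Functor.whiskeringLeft A (Bᵒᵖ ⥤ Type u) C).mapIso
      ((Functor.isoWhiskerLeft i uliftYonedaIsoYoneda.{u}).symm ≪≫
        Presheaf.compULiftYonedaIsoULiftYonedaCompLan.{u} i ≪≫
        Functor.isoWhiskerRight uliftYonedaIsoYoneda.{u} _).symm)
    exact Iso.refl _
  exact Adjunction.leftAdjointUniq ((adjA.comp adjW).ofNatIsoRight iso)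
    ((i ⋙ yoneda).lanAdjunction C)
end
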